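/- Under the Markov assumption X_S − X_0 − X_T for disjoint S,T ⊆ L, if two agents i ≠ j satisfy p_{X_i|X_0} = p_{X_j|X_0}, then for every S ⊆ L with i,j ∉ S, v(S∪{i}) = v(S∪{j}), where v(S) = I(X_S; X_0 | X_{L\S}). That is, i and j are symmetric players of the game. -/
import Mathlib

noncomputable section
open Finset
open scoped Classical BigOperators

/-- Probability of an event under a pmf on a finite sample space. -/
def Pr {Ω : Type} [Fintype Ω] (p : Ω → ℝ) (E : Ω → Prop) : ℝ :=
  ∑ ω : Ω, if E ω then p ω else 0

/-- `p` is a probability mass function. -/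
def IsPMF {Ω : Type} [Fintype Ω] (p : Ω → ℝ) : Prop :=
  (∀ ω, 0 ≤ p ω) ∧ (∑ ω : Ω, p ω) = 1

/-- Shannon entropy of a finitely-valued random variable `X` under pmf `p`. -/
def ent {Ω α : Type} [Fintype Ω] [Fintype α] (p : Ω → ℝ) (X : Ω → α) : ℝ :=
  -∑ a : α, Pr p (fun ω => X ω = a) * Real.log (Pr p (fun ω => X ω = a))

/-- Conditional Shannon entropy `H(X|Y)`. -/
def condEnt {Ω α β : Type} [Fintype Ω] [Fintype α] [Fintype β]
    (p : Ω → ℝ) (X : Ω → α) (Y : Ω → β) : ℝ :=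
  ent p (fun ω => (X ω, Y ω)) - ent p Y

/-- Mutual information `I(X;Y)`. -/
def mi {Ω α β : Type} [Fintype Ω] [Fintype α] [Fintype β]
    (p : Ω → ℝ) (X : Ω → α) (Y : Ω → β) : ℝ :=
  ent p X + ent p Y - ent p (fun ω => (X ω, Y ω))

/-- Conditional mutual information `I(X;Y|Z)`. -/
def cmi {Ω α β γ : Type} [Fintype Ω] [Fintype α] [Fintype β] [Fintype γ]
    (p : Ω → ℝ) (X : Ω → α) (Y : Ω → β) (Z : Ω → γ) : ℝ :=
  ent p (fun ω => (X ω, Z ω)) + ent p (fun ω => (Y ω, Z ω))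
    - ent p (fun ω => (X ω, Y ω, Z ω)) - ent p Z

/-- `X` and `Y` are conditionally independent given `Z` (Markov chain `X - Z - Y`). -/
def CondIndep {Ω α β γ : Type} [Fintype Ω] [Fintype α] [Fintype β] [Fintype γ]
    (p : Ω → ℝ) (X : Ω → α) (Y : Ω → β) (Z : Ω → γ) : Prop :=
  ∀ (a : α) (b : β) (c : γ),
    Pr p (fun ω => X ω = a ∧ Y ω = b ∧ Z ω = c) * Pr p (fun ω => Z ω = c)
      = Pr p (fun ω => X ω = a ∧ Z ω = c) * Pr p (fun ω => Y ω = b ∧ Z ω = c)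

/-- The tuple random variable `X_S = (X_l)_{l ∈ S}`. -/
def XS {Ω L 𝒳 : Type} [Fintype Ω] (X : L → Ω → 𝒳) (S : Finset L) :
    Ω → (S → 𝒳) :=
  fun ω i => X i ω

/-- The value function of the secret-key generation game:
`v(S) = I(X_S; X_0 | X_{L\S})`. -/
def vGame {Ω L 𝒳 β : Type} [Fintype Ω] [Fintype L] [DecidableEq L] [Fintype 𝒳] [Fintype β]
    (p : Ω → ℝ) (X : L → Ω → 𝒳) (X0 : Ω → β) (S : Finset L) : ℝ :=
  cmi p (XS X S) X0 (XS X Sᶜ)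

section Aux
variable {Ω : Type} [Fintype Ω]

lemma Pr_congr {p : Ω → ℝ} {E F : Ω → Prop} (h : ∀ ω, E ω ↔ F ω) : Pr p E = Pr p F :=
  Finset.sum_congr rfl fun ω _ => by rw [if_congr (h ω) rfl rfl]

lemma Pr_nonneg {p : Ω → ℝ} (hp : ∀ ω, 0 ≤ p ω) (E : Ω → Prop) : 0 ≤ Pr p E :=
  Finset.sum_nonneg fun ω _ => by split <;> simp [hp ω]

lemma Pr_mono {p : Ω → ℝ} (hp : ∀ ω, 0 ≤ p ω) {E F : Ω → Prop} (h : ∀ ω, E ω → F ω) :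
    Pr p E ≤ Pr p F :=
  Finset.sum_le_sum fun ω _ => by
    by_cases hE : E ω
    · rw [if_pos hE, if_pos (h ω hE)]
    · rw [if_neg hE]; split <;> simp [hp ω]

lemma Pr_comp {γ δ : Type} [Fintype γ] (p : Ω → ℝ) (Y : Ω → γ) (g : γ → δ) (a : δ) :
    Pr p (fun ω => g (Y ω) = a) = ∑ v : γ, if g v = a then Pr p (fun ω => Y ω = v) else 0 := by
  unfold Pr
  have key : ∀ v : γ, (if g v = a then (∑ ω : Ω, if Y ω = v then p ω else 0) else 0)
      = ∑ ω : Ω, if Y ω = v ∧ g v = a then p ω else 0 := by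
    intro v
    by_cases h : g v = a <;> simp [h]
  rw [Finset.sum_congr rfl fun v _ => key v, Finset.sum_comm]
  refine Finset.sum_congr rfl fun ω _ => ?_
  rw [Finset.sum_eq_single (Y ω)]
  · simp
  · intro v _ hv
    rw [if_neg]
    exact fun hc => hv hc.1.symm
  · simp

lemma ent_comp_congr {γ δ : Type} [Fintype γ] [Fintype δ] (p : Ω → ℝ) (Y Y' : Ω → γ)
    (h : ∀ v, Pr p (fun ω => Y ω = v) = Pr p (fun ω => Y' ω = v)) (g : γ → δ) :
    ent p (fun ω => g (Y ω)) = ent p (fun ω => g (Y' ω)) := by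
  unfold ent
  congr 1
  refine Finset.sum_congr rfl fun a _ => ?_
  rw [Pr_comp, Pr_comp]
  simp only [h]

lemma ent_comp_inj {γ δ : Type} [Fintype γ] [Fintype δ] (p : Ω → ℝ) (Z : Ω → γ)
    (h : γ → δ) (hinj : Function.Injective h) :
    ent p (fun ω => h (Z ω)) = ent p Z := by
  unfold ent
  congr 1
  have hvan : ∀ b ∈ (Finset.univ : Finset δ), b ∉ Finset.univ.image h →
      Pr p (fun ω => h (Z ω) = b) * Real.log (Pr p (fun ω => h (Z ω) = b)) = 0 := by
    intro b _ hb
    have hz : Pr p (fun ω => h (Z ω) = b) = 0 := by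
      refine Finset.sum_eq_zero fun ω _ => ?_
      rw [if_neg]
      exact fun hc => hb (Finset.mem_image.mpr ⟨Z ω, Finset.mem_univ _, hc⟩)
    rw [hz]; simp
  rw [← Finset.sum_subset (Finset.subset_univ (Finset.univ.image h)) hvan,
    Finset.sum_image (fun a _ a' _ hA => hinj hA)]
  refine Finset.sum_congr rfl fun a _ => ?_
  rw [Pr_congr (fun ω => hinj.eq_iff)]

lemma fact_lemma {L 𝒳 β : Type} [Fintype L] [DecidableEq L] [Fintype 𝒳] [Fintype β]
    (p : Ω → ℝ) (X : L → Ω → 𝒳) (X0 : Ω → β)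
    (hM : ∀ S T : Finset L, Disjoint S T → CondIndep p (XS X S) (XS X T) X0)
    (U : Finset L) (f : L → 𝒳) (c : β) :
    Pr p (fun ω => X0 ω = c) ^ U.card * Pr p (fun ω => (∀ l ∈ U, X l ω = f l) ∧ X0 ω = c)
      = Pr p (fun ω => X0 ω = c) * ∏ l ∈ U, Pr p (fun ω => X l ω = f l ∧ X0 ω = c) := by
  induction U using Finset.induction_on with
  | empty => simp [Pr]
  | @insert m U hm ih =>
    have hdisj : Disjoint ({m} : Finset L) U := Finset.disjoint_singleton_left.mpr hm
    have hci := hM {m} U hdisj (fun x => f x.1) (fun x => f x.1) c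
    have h1 : Pr p (fun ω => XS X {m} ω = (fun x => f x.1) ∧ XS X U ω = (fun x => f x.1) ∧ X0 ω = c)
        = Pr p (fun ω => (∀ l ∈ insert m U, X l ω = f l) ∧ X0 ω = c) :=
      Pr_congr fun ω => by
        simp [XS, funext_iff, Subtype.forall, Finset.forall_mem_insert, and_assoc]
    have h2 : Pr p (fun ω => XS X {m} ω = (fun x => f x.1) ∧ X0 ω = c)
        = Pr p (fun ω => X m ω = f m ∧ X0 ω = c) :=
      Pr_congr fun ω => by simp [XS, funext_iff, Subtype.forall]
    have h3 : Pr p (fun ω => XS X U ω = (fun x => f x.1) ∧ X0 ω = c)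
        = Pr p (fun ω => (∀ l ∈ U, X l ω = f l) ∧ X0 ω = c) :=
      Pr_congr fun ω => by simp [XS, funext_iff, Subtype.forall]
    rw [h1, h2, h3] at hci
    rw [Finset.card_insert_of_notMem hm, Finset.prod_insert hm]
    calc Pr p (fun ω => X0 ω = c) ^ (U.card + 1)
          * Pr p (fun ω => (∀ l ∈ insert m U, X l ω = f l) ∧ X0 ω = c)
        = Pr p (fun ω => X0 ω = c) ^ U.card
            * (Pr p (fun ω => (∀ l ∈ insert m U, X l ω = f l) ∧ X0 ω = c)
                * Pr p (fun ω => X0 ω = c)) := by ring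
      _ = Pr p (fun ω => X0 ω = c) ^ U.card
            * (Pr p (fun ω => X m ω = f m ∧ X0 ω = c)
                * Pr p (fun ω => (∀ l ∈ U, X l ω = f l) ∧ X0 ω = c)) := by rw [hci]
      _ = Pr p (fun ω => X m ω = f m ∧ X0 ω = c)
            * (Pr p (fun ω => X0 ω = c) ^ U.card
                * Pr p (fun ω => (∀ l ∈ U, X l ω = f l) ∧ X0 ω = c)) := by ring
      _ = Pr p (fun ω => X m ω = f m ∧ X0 ω = c)
            * (Pr p (fun ω => X0 ω = c) * ∏ l ∈ U, Pr p (fun ω => X l ω = f l ∧ X0 ω = c)) := by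
            rw [ih]
      _ = Pr p (fun ω => X0 ω = c)
            * (Pr p (fun ω => X m ω = f m ∧ X0 ω = c)
                * ∏ l ∈ U, Pr p (fun ω => X l ω = f l ∧ X0 ω = c)) := by ring

lemma key_swap {L 𝒳 β : Type} [Fintype L] [DecidableEq L] [Fintype 𝒳] [Fintype β]
    (p : Ω → ℝ) (hp0 : ∀ ω, 0 ≤ p ω) (X : L → Ω → 𝒳) (X0 : Ω → β)
    (hM : ∀ S T : Finset L, Disjoint S T → CondIndep p (XS X S) (XS X T) X0)
    (i j : L)
    (hcond : ∀ (a : 𝒳) (c : β),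
      Pr p (fun ω => X i ω = a ∧ X0 ω = c) = Pr p (fun ω => X j ω = a ∧ X0 ω = c))
    (f : L → 𝒳) (c : β) :
    Pr p (fun ω => (∀ l, X l ω = f l) ∧ X0 ω = c)
      = Pr p (fun ω => (∀ l, X l ω = f (Equiv.swap i j l)) ∧ X0 ω = c) := by
  set σ := Equiv.swap i j with hσ
  by_cases hc : Pr p (fun ω => X0 ω = c) = 0
  · have h1 : Pr p (fun ω => (∀ l, X l ω = f l) ∧ X0 ω = c) = 0 :=
      le_antisymm (hc ▸ Pr_mono hp0 fun ω h => h.2) (Pr_nonneg hp0 _)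
    have h2 : Pr p (fun ω => (∀ l, X l ω = f (σ l)) ∧ X0 ω = c) = 0 :=
      le_antisymm (hc ▸ Pr_mono hp0 fun ω h => h.2) (Pr_nonneg hp0 _)
    rw [h1, h2]
  · have e1 := fact_lemma p X X0 hM Finset.univ f c
    have e2 := fact_lemma p X X0 hM Finset.univ (fun l => f (σ l)) c
    have g1 : Pr p (fun ω => (∀ l ∈ Finset.univ, X l ω = f l) ∧ X0 ω = c)
        = Pr p (fun ω => (∀ l, X l ω = f l) ∧ X0 ω = c) :=
      Pr_congr fun ω => by simp
    have g2 : Pr p (fun ω => (∀ l ∈ Finset.univ, X l ω = f (σ l)) ∧ X0 ω = c)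
        = Pr p (fun ω => (∀ l, X l ω = f (σ l)) ∧ X0 ω = c) :=
      Pr_congr fun ω => by simp
    rw [g1] at e1
    rw [g2] at e2
    have hprod : (∏ l : L, Pr p (fun ω => X l ω = f (σ l) ∧ X0 ω = c))
        = ∏ l : L, Pr p (fun ω => X l ω = f l ∧ X0 ω = c) := by
      have step : (∏ l : L, Pr p (fun ω => X l ω = f (σ l) ∧ X0 ω = c))
          = ∏ l : L, Pr p (fun ω => X (σ l) ω = f (σ l) ∧ X0 ω = c) := by
        refine Finset.prod_congr rfl fun l _ => ?_
        by_cases hli : l = i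
        · rw [hli, show σ i = j from Equiv.swap_apply_left i j]
          exact hcond (f j) c
        · by_cases hlj : l = j
          · rw [hlj, show σ j = i from Equiv.swap_apply_right i j]
            exact (hcond (f i) c).symm
          · rw [show σ l = l from Equiv.swap_apply_of_ne_of_ne hli hlj]
      rw [step]
      exact Equiv.prod_comp σ fun l => Pr p (fun ω => X l ω = f l ∧ X0 ω = c)
    apply mul_left_cancel₀ (pow_ne_zero (Finset.univ : Finset L).card hc)
    rw [e1, e2, hprod]

def remap {L 𝒳 : Type} (σ : L → L) (T T' : Finset L)
    (h : ∀ b ∈ T', σ b ∈ T) (u : {x // x ∈ T} → 𝒳) : {x // x ∈ T'} → 𝒳 :=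
  fun b => u ⟨σ b.1, h b.1 b.2⟩

lemma remap_inj {L 𝒳 : Type} (σ : L → L) (hσ : ∀ l, σ (σ l) = l) (T T' : Finset L)
    (h : ∀ b ∈ T', σ b ∈ T) (h' : ∀ a ∈ T, σ a ∈ T') :
    Function.Injective (remap (𝒳 := 𝒳) σ T T' h) := by
  intro u u' he
  funext a
  have h2 := congrFun he ⟨σ a.1, h' a.1 a.2⟩
  simp only [remap] at h2
  have ha : (⟨σ (σ a.1), h _ (h' a.1 a.2)⟩ : {x // x ∈ T}) = a := Subtype.ext (hσ a.1)
  rwa [ha] at h2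

lemma prodmap_inj {α β γ δ : Type} {f : α → γ} {g : β → δ}
    (hf : Function.Injective f) (hg : Function.Injective g) :
    Function.Injective (Prod.map f g) := by
  rintro ⟨a, b⟩ ⟨a', b'⟩ h
  simp only [Prod.map, Prod.ext_iff] at h ⊢
  exact ⟨hf h.1, hg h.2⟩

end Aux

/-- under the Markov assumption, if agents `i ≠ j` satisfy
`p_{X_i|X_0} = p_{X_j|X_0}` (equivalently, equality of the joint distributions with `X_0`),
then `v(S∪{i}) = v(S∪{j})` for every `S` not containing `i`, `j`:
`i` and `j` are symmetric players. -/
theorem statement12 {Ω L 𝒳 β : Type} [Fintype Ω] [Fintype L] [DecidableEq L] [Fintype 𝒳] [Fintype β]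
    (p : Ω → ℝ) (hp : IsPMF p) (X : L → Ω → 𝒳) (X0 : Ω → β)
    (hM : ∀ S T : Finset L, Disjoint S T → CondIndep p (XS X S) (XS X T) X0)
    (i j : L) (hij : i ≠ j)
    (hcond : ∀ (a : 𝒳) (c : β),
      Pr p (fun ω => X i ω = a ∧ X0 ω = c) = Pr p (fun ω => X j ω = a ∧ X0 ω = c)) :
    ∀ S : Finset L, i ∉ S → j ∉ S →
      vGame p X X0 (insert i S) = vGame p X X0 (insert j S) := by
  intro S hiS hjS
  set σ := Equiv.swap i j with hσdef
  have hσσ : ∀ l, σ (σ l) = l := fun l => Equiv.swap_apply_self i j l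
  have hσi : σ i = j := Equiv.swap_apply_left i j
  have hσj : σ j = i := Equiv.swap_apply_right i j
  have hσo : ∀ l, l ≠ i → l ≠ j → σ l = l := fun l h1 h2 => Equiv.swap_apply_of_ne_of_ne h1 h2
  set A := insert i S with hA
  set B := insert j S with hB
  have hBA : ∀ b ∈ B, σ b ∈ A := by
    intro b hb
    rcases Finset.mem_insert.mp hb with rfl | hbS
    · rw [hσj]; exact Finset.mem_insert_self i S
    · rw [hσo b (fun h => hiS (h ▸ hbS)) (fun h => hjS (h ▸ hbS))]
      exact Finset.mem_insert_of_mem hbS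
  have hAB : ∀ a ∈ A, σ a ∈ B := by
    intro a ha
    rcases Finset.mem_insert.mp ha with rfl | haS
    · rw [hσi]; exact Finset.mem_insert_self j S
    · rw [hσo a (fun h => hiS (h ▸ haS)) (fun h => hjS (h ▸ haS))]
      exact Finset.mem_insert_of_mem haS
  have hBcAc : ∀ b ∈ Bᶜ, σ b ∈ Aᶜ := by
    intro b hb
    rw [Finset.mem_compl] at hb ⊢
    intro hcon
    have := hAB _ hcon
    rw [hσσ] at this
    exact hb this
  have hAcBc : ∀ a ∈ Aᶜ, σ a ∈ Bᶜ := by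
    intro a ha
    rw [Finset.mem_compl] at ha ⊢
    intro hcon
    have := hBA _ hcon
    rw [hσσ] at this
    exact ha this
  -- distribution equality of the full tuple
  have hdist : ∀ v : (L → 𝒳) × β,
      Pr p (fun ω => (fun l => X l ω, X0 ω) = v)
        = Pr p (fun ω => (fun l => X (σ l) ω, X0 ω) = v) := by
    rintro ⟨f, c⟩
    have r1 : Pr p (fun ω => (fun l => X l ω, X0 ω) = (f, c))
        = Pr p (fun ω => (∀ l, X l ω = f l) ∧ X0 ω = c) :=
      Pr_congr fun ω => by simp [Prod.ext_iff, funext_iff]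
    have r2 : Pr p (fun ω => (fun l => X (σ l) ω, X0 ω) = (f, c))
        = Pr p (fun ω => (∀ l, X l ω = f (σ l)) ∧ X0 ω = c) := by
      refine Pr_congr fun ω => ?_
      rw [Prod.ext_iff]
      simp only [funext_iff]
      constructor
      · rintro ⟨h1, h2⟩
        refine ⟨fun l => ?_, h2⟩
        have := h1 (σ l)
        rwa [hσσ] at this
      · rintro ⟨h1, h2⟩
        refine ⟨fun l => ?_, h2⟩
        have := h1 (σ l)
        rwa [hσσ] at this
    rw [r1, r2]
    exact key_swap p hp.1 X X0 hM i j hcond f c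
  -- the four entropy identities
  have e1 : ent p (fun ω => (XS X B ω, XS X Bᶜ ω)) = ent p (fun ω => (XS X A ω, XS X Aᶜ ω)) := by
    have s1 := ent_comp_congr p _ _ hdist
      (fun v : (L → 𝒳) × β => ((fun b : {x // x ∈ B} => v.1 b.1, fun b : {x // x ∈ Bᶜ} => v.1 b.1)))
    have s2 := ent_comp_inj p (fun ω => (XS X A ω, XS X Aᶜ ω))
      (Prod.map (remap σ A B hBA) (remap σ Aᶜ Bᶜ hBcAc))
      (prodmap_inj (remap_inj σ hσσ A B hBA hAB) (remap_inj σ hσσ Aᶜ Bᶜ hBcAc hAcBc))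
    exact s1.trans s2
  have e2 : ent p (fun ω => (X0 ω, XS X Bᶜ ω)) = ent p (fun ω => (X0 ω, XS X Aᶜ ω)) := by
    have s1 := ent_comp_congr p _ _ hdist
      (fun v : (L → 𝒳) × β => (v.2, fun b : {x // x ∈ Bᶜ} => v.1 b.1))
    have s2 := ent_comp_inj p (fun ω => (X0 ω, XS X Aᶜ ω))
      (Prod.map id (remap σ Aᶜ Bᶜ hBcAc))
      (prodmap_inj (fun a b h => h) (remap_inj σ hσσ Aᶜ Bᶜ hBcAc hAcBc))
    exact s1.trans s2
  have e3 : ent p (fun ω => (XS X B ω, X0 ω, XS X Bᶜ ω))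
      = ent p (fun ω => (XS X A ω, X0 ω, XS X Aᶜ ω)) := by
    have s1 := ent_comp_congr p _ _ hdist
      (fun v : (L → 𝒳) × β =>
        ((fun b : {x // x ∈ B} => v.1 b.1, v.2, fun b : {x // x ∈ Bᶜ} => v.1 b.1)))
    have s2 := ent_comp_inj p (fun ω => (XS X A ω, X0 ω, XS X Aᶜ ω))
      (Prod.map (remap σ A B hBA) (Prod.map id (remap σ Aᶜ Bᶜ hBcAc)))
      (prodmap_inj (remap_inj σ hσσ A B hBA hAB)
        (prodmap_inj (fun a b h => h) (remap_inj σ hσσ Aᶜ Bᶜ hBcAc hAcBc)))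
    exact s1.trans s2
  have e4 : ent p (XS X Bᶜ) = ent p (XS X Aᶜ) := by
    have s1 := ent_comp_congr p _ _ hdist
      (fun v : (L → 𝒳) × β => (fun b : {x // x ∈ Bᶜ} => v.1 b.1))
    have s2 := ent_comp_inj p (XS X Aᶜ) (remap σ Aᶜ Bᶜ hBcAc)
      (remap_inj σ hσσ Aᶜ Bᶜ hBcAc hAcBc)
    exact s1.trans s2
  unfold vGame cmi
  rw [e1, e2, e3, e4]
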